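/- Let A be a d×ν matrix with nonnegative integer entries and let B = {z_1, …, z_L} ⊆ Ker_Z(A). Then B is a Markov basis for A if and only if the set of binomials {u^{z_l⁺} − u^{z_l⁻} : l = 1, …, L} generates the toric ideal I_A in k[u_1, …, u_ν]. -/

import Mathlib

open Finset MvPolynomial

/-- `B ⊆ Ker_ℤ(A)` is a Markov basis for a nonnegative integer configuration matrix `A`
if for every fiber `F_t = {x ∈ ℤ_{≥0}^ν : A x = t}` the graph on `F_t` whose edges join
`x, y` with `x - y ∈ B` or `y - x ∈ B` is connected.  (Since every step difference lies in
`Ker_ℤ(A)`, any path starting in a fiber stays in that fiber, so connectivity of every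
fiber is equivalent to: any two nonnegative tables with the same `A`-value are joined by a
path of moves through nonnegative tables.) -/
def IsMarkovBasis {d ν : ℕ} (A : Matrix (Fin d) (Fin ν) ℕ) (B : Set (Fin ν → ℤ)) : Prop :=
  ∀ x y : Fin ν → ℕ,
    (∀ i, ∑ j, A i j * x j = ∑ j, A i j * y j) →
    Relation.ReflTransGen
      (fun a b : Fin ν → ℕ =>
        (fun j => (a j : ℤ) - (b j : ℤ)) ∈ B ∨ (fun j => (b j : ℤ) - (a j : ℤ)) ∈ B)
      x y

/-- The toric ideal `I_A ⊆ k[u_1,…,u_ν]`: the ideal generated by all binomials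
`u^{z⁺} - u^{z⁻}` where `z = z⁺ - z⁻` ranges over the integer kernel of `A`. -/
noncomputable def toricIdeal (k : Type*) [Field k] {d ν : ℕ} (A : Matrix (Fin d) (Fin ν) ℕ) :
    Ideal (MvPolynomial (Fin ν) k) :=
  Ideal.span { f | ∃ z : Fin ν → ℤ, (∀ i, ∑ j, (A i j : ℤ) * z j = 0) ∧
    f = (∏ j, X j ^ (z j).toNat) - ∏ j, X j ^ (-z j).toNat }

section aux
variable {ν : ℕ}

/-- one move step -/
def dsStep (B : Set (Fin ν → ℤ)) (a b : Fin ν → ℕ) : Prop :=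
  (fun j => (a j : ℤ) - (b j : ℤ)) ∈ B ∨ (fun j => (b j : ℤ) - (a j : ℤ)) ∈ B

lemma dsStep_add (B : Set (Fin ν → ℤ)) {a b : Fin ν → ℕ} (c : Fin ν → ℕ)
    (h : dsStep B a b) : dsStep B (a + c) (b + c) := by
  have h1 : (fun j => ((a + c) j : ℤ) - ((b + c) j : ℤ)) = fun j => (a j : ℤ) - b j := by
    funext j; push_cast [Pi.add_apply]; ring
  have h2 : (fun j => ((b + c) j : ℤ) - ((a + c) j : ℤ)) = fun j => (b j : ℤ) - a j := by
    funext j; push_cast [Pi.add_apply]; ring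
  unfold dsStep
  rw [h1, h2]; exact h

/-- the path congruence -/
def dsCon (B : Set (Fin ν → ℤ)) : AddCon (Fin ν → ℕ) where
  r := Relation.ReflTransGen (dsStep B)
  iseqv := ⟨fun _ => .refl,
    fun h => (@Relation.ReflTransGen.stdSymm _ _ ⟨fun _ _ hs => hs.symm⟩).symm _ _ h,
    Relation.ReflTransGen.trans⟩
  add' := by
    intro w x y z h1 h2
    have p1 : Relation.ReflTransGen (dsStep B) (w + y) (x + y) :=
      Relation.ReflTransGen.lift (· + y) (fun a b hab => dsStep_add B y hab) _ _ h1
    have p2 : Relation.ReflTransGen (dsStep B) (x + y) (x + z) := by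
      have := Relation.ReflTransGen.lift (· + x) (fun a b hab => dsStep_add B x hab) _ _ h2
      simpa [add_comm] using this
    exact p1.trans p2
end aux

section aux2
variable {ν : ℕ} (k : Type*) [Field k]

/-- factor a difference of monomials through the binomial of the difference vector -/
lemma dsFactor {a b : Fin ν → ℕ} {w : Fin ν → ℤ}
    (h : ∀ j, (a j : ℤ) - (b j : ℤ) = w j) :
    ((∏ j, X j ^ a j) - ∏ j, X j ^ b j : MvPolynomial (Fin ν) k) =
      (∏ j, X j ^ (min (a j) (b j))) *
        ((∏ j, X j ^ (w j).toNat) - ∏ j, X j ^ (-w j).toNat) := by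
  have ha : ∀ j, a j = min (a j) (b j) + (w j).toNat := fun j => by
    have := h j; omega
  have hb : ∀ j, b j = min (a j) (b j) + (-w j).toNat := fun j => by
    have := h j; omega
  rw [mul_sub]
  congr 1
  · rw [← Finset.prod_mul_distrib]
    exact Finset.prod_congr rfl fun j _ => by rw [← pow_add, ← ha j]
  · rw [← Finset.prod_mul_distrib]
    exact Finset.prod_congr rfl fun j _ => by rw [← pow_add, ← hb j]

noncomputable def dsPhi (B : Set (Fin ν → ℤ)) :
    MvPolynomial (Fin ν) k →ₐ[k] AddMonoidAlgebra k (dsCon B).Quotient :=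
  MvPolynomial.aeval (fun j => AddMonoidAlgebra.single ((Pi.single j 1 : Fin ν → ℕ) : (dsCon B).Quotient) 1)

lemma dsPhi_monomial (B : Set (Fin ν → ℤ)) (x : Fin ν → ℕ) :
    dsPhi k B (∏ j, X j ^ x j) = AddMonoidAlgebra.single ((x : (dsCon B).Quotient)) 1 := by
  rw [map_prod]
  simp only [map_pow, dsPhi, aeval_X, AddMonoidAlgebra.single_pow, one_pow]
  rw [AddMonoidAlgebra.prod_single]
  congr 1
  · have : ∀ j : Fin ν, (x j) • ((Pi.single j 1 : Fin ν → ℕ) : (dsCon B).Quotient)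
        = (((Pi.single j (x j) : Fin ν → ℕ)) : (dsCon B).Quotient) := by
      intro j
      rw [show ((Pi.single j 1 : Fin ν → ℕ) : (dsCon B).Quotient)
          = AddCon.mk' _ (Pi.single j 1) from rfl,
        show ((Pi.single j (x j) : Fin ν → ℕ) : (dsCon B).Quotient)
          = AddCon.mk' _ (Pi.single j (x j)) from rfl, ← map_nsmul]
      congr 1
      funext i
      by_cases hij : i = j <;> simp [Pi.single_apply, hij]
    rw [Finset.sum_congr rfl fun j _ => this j]
    have hms : ∑ j : Fin ν, ((Pi.single j (x j) : Fin ν → ℕ) : (dsCon B).Quotient)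
        = AddCon.mk' _ (∑ j : Fin ν, Pi.single j (x j)) :=
      (map_sum (AddCon.mk' (dsCon B)) (fun j => Pi.single j (x j)) Finset.univ).symm
    rw [hms, Finset.univ_sum_single x]
    rfl
  · simp

lemma dsPathMem {L : ℕ} (z : Fin L → (Fin ν → ℤ)) {a b : Fin ν → ℕ}
    (h : Relation.ReflTransGen (dsStep (Set.range z)) a b) :
    ((∏ j, X j ^ a j) - ∏ j, X j ^ b j : MvPolynomial (Fin ν) k) ∈
      Ideal.span (Set.range (fun l : Fin L =>
        ((∏ j, X j ^ (z l j).toNat) - ∏ j, X j ^ (-z l j).toNat : MvPolynomial (Fin ν) k))) := by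
  induction h with
  | refl => simp
  | @tail b' c' hab hbc ih =>
    have hsplit : ((∏ j, X j ^ a j) - ∏ j, X j ^ c' j : MvPolynomial (Fin ν) k)
        = ((∏ j, X j ^ a j) - ∏ j, X j ^ b' j) + ((∏ j, X j ^ b' j) - ∏ j, X j ^ c' j) := by
      ring
    rw [hsplit]
    refine add_mem ih ?_
    rcases hbc with ⟨l, hl⟩ | ⟨l, hl⟩
    · rw [dsFactor k (w := z l) (fun j => (congrFun hl j).symm)]
      exact Ideal.mul_mem_left _ _ (Ideal.subset_span ⟨l, rfl⟩)
    · have : ((∏ j, X j ^ b' j) - ∏ j, X j ^ c' j : MvPolynomial (Fin ν) k)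
          = -((∏ j, X j ^ c' j) - ∏ j, X j ^ b' j) := by ring
      rw [this, dsFactor k (w := z l) (fun j => (congrFun hl j).symm)]
      exact neg_mem (Ideal.mul_mem_left _ _ (Ideal.subset_span ⟨l, rfl⟩))
end aux2


/-- **Diaconis–Sturmfels, Theorem 3.1.**  Let `A` be a `d × ν` nonnegative integer matrix
and `B = {z_1, …, z_L} ⊆ Ker_ℤ(A)`.  Then `B` is a Markov basis for `A` if and only if the
binomials `u^{z_l⁺} - u^{z_l⁻}`, `l = 1, …, L`, generate the toric ideal `I_A`. -/
theorem isMarkovBasis_iff_generates_toricIdeal (k : Type*) [Field k] {d ν L : ℕ}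
    (A : Matrix (Fin d) (Fin ν) ℕ) (z : Fin L → (Fin ν → ℤ))
    (hz : ∀ l, ∀ i, ∑ j, (A i j : ℤ) * z l j = 0) :
    IsMarkovBasis A (Set.range z) ↔
      Ideal.span (Set.range (fun l : Fin L =>
          ((∏ j, X j ^ (z l j).toNat) - ∏ j, X j ^ (-z l j).toNat :
            MvPolynomial (Fin ν) k))) = toricIdeal k A := by
  constructor
  · intro hM
    apply le_antisymm
    · rw [Ideal.span_le]
      rintro f ⟨l, rfl⟩
      exact Ideal.subset_span ⟨z l, hz l, rfl⟩
    · rw [toricIdeal, Ideal.span_le]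
      rintro f ⟨w, hw, rfl⟩
      set a : Fin ν → ℕ := fun j => (w j).toNat with ha
      set b : Fin ν → ℕ := fun j => (-w j).toNat with hb
      have hab : ∀ j, (a j : ℤ) - (b j : ℤ) = w j := fun j => by simp only [ha, hb]; omega
      have hfib : ∀ i, ∑ j, A i j * a j = ∑ j, A i j * b j := by
        intro i
        have : ((∑ j, A i j * a j : ℕ) : ℤ) = ((∑ j, A i j * b j : ℕ) : ℤ) := by
          push_cast
          have : ∑ j, (A i j : ℤ) * a j - ∑ j, (A i j : ℤ) * b j = 0 := by
            rw [← Finset.sum_sub_distrib]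
            rw [Finset.sum_congr rfl (fun j _ => show (A i j : ℤ) * a j - (A i j : ℤ) * b j
              = (A i j : ℤ) * w j by rw [← hab j]; ring)]
            exact hw i
          linarith
        exact_mod_cast this
      exact dsPathMem k z (hM a b hfib)
  · intro hspan x y hxy
    -- u^x - u^y ∈ toricIdeal
    set w : Fin ν → ℤ := fun j => (x j : ℤ) - y j with hwdef
    have hker : ∀ i, ∑ j, (A i j : ℤ) * w j = 0 := by
      intro i
      have := hxy i
      have hc : ((∑ j, A i j * x j : ℕ) : ℤ) = ((∑ j, A i j * y j : ℕ) : ℤ) := by exact_mod_cast this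
      push_cast at hc
      simp only [hwdef, mul_sub]
      rw [Finset.sum_sub_distrib]
      linarith
    have hmem : ((∏ j, X j ^ x j) - ∏ j, X j ^ y j : MvPolynomial (Fin ν) k) ∈ toricIdeal k A := by
      rw [dsFactor k (w := w) (fun j => rfl)]
      exact Ideal.mul_mem_left _ _ (Ideal.subset_span ⟨w, hker, rfl⟩)
    rw [← hspan] at hmem
    -- apply φ
    set B := Set.range z with hB
    have hkerφ : Ideal.span (Set.range (fun l : Fin L =>
          ((∏ j, X j ^ (z l j).toNat) - ∏ j, X j ^ (-z l j).toNat :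
            MvPolynomial (Fin ν) k))) ≤ RingHom.ker (dsPhi k B).toRingHom := by
      rw [Ideal.span_le]
      rintro f ⟨l, rfl⟩
      simp only [SetLike.mem_coe, RingHom.mem_ker, AlgHom.toRingHom_eq_coe, RingHom.coe_coe]
      rw [map_sub, dsPhi_monomial, dsPhi_monomial]
      have hstep : dsStep B (fun j => (z l j).toNat) (fun j => (-z l j).toNat) := by
        left
        refine ⟨l, ?_⟩
        funext j
        show z l j = ((z l j).toNat : ℤ) - ((-z l j).toNat : ℤ)
        omega
      have : ((fun j => (z l j).toNat : Fin ν → ℕ) : (dsCon B).Quotient)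
          = ((fun j => (-z l j).toNat : Fin ν → ℕ) : (dsCon B).Quotient) :=
        (AddCon.eq _).2 (Relation.ReflTransGen.single hstep)
      rw [this, sub_self]
    have h0 : dsPhi k B ((∏ j, X j ^ x j) - ∏ j, X j ^ y j) = 0 := hkerφ hmem
    rw [map_sub, dsPhi_monomial, dsPhi_monomial, sub_eq_zero] at h0
    have heq : ((x : (dsCon B).Quotient)) = y :=
      AddMonoidAlgebra.single_left_injective (one_ne_zero) h0
    exact (AddCon.eq _).1 heq
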